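/- Let G(U,V;E) be a bipartite graph, π a permutation of V, and S ⊆ V. Let S' ⊆ S be the set of the α·n lowest-ranked (under π) vertices of S, let v' be the highest-ranked vertex of S', and let P = {v ∈ V \ S' : π(v) < π(v')}. If |P| < |N(S')|, then for every permutation σ of U, the greedy matching M[σ,π] matches at least one vertex of S'. -/

import Mathlib

/-- Auxiliary greedy process: process the list of left vertices in order; each is
matched to its unmatched neighbor of lowest rank under `π` (if any). -/
def greedyAux {U V : Type*} [Fintype V] [DecidableEq V] {n : ℕ}
    (E : U → V → Bool) (π : V ≃ Fin n) :
    List U → Finset V → List (U × V)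
  | [], _ => []
  | u :: us, matched =>
    let cand := (Finset.univ.filter (fun v => E u v = true ∧ v ∉ matched)).image π
    if h : cand.Nonempty then
      (u, π.symm (cand.min' h)) :: greedyAux E π us (insert (π.symm (cand.min' h)) matched)
    else
      greedyAux E π us matched

/-- The greedy matching `M[σ,π]`: vertices of `U` arrive in the order given by `σ`,
each matched to its lowest-ranked (under `π`) yet-unmatched neighbor. -/
def greedy {U V : Type*} [Fintype V] [DecidableEq V] {m n : ℕ}
    (E : U → V → Bool) (σ : U ≃ Fin m) (π : V ≃ Fin n) : List (U × V) :=
  greedyAux E π ((List.finRange m).map σ.symm) ∅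

lemma greedyAux_count {U V : Type*} [Fintype V] [DecidableEq U] [DecidableEq V] {n : ℕ}
    (E : U → V → Bool) (π : V ≃ Fin n) (S' : Finset V) (v' : V) (hv' : v' ∈ S')
    (hv'max : ∀ v ∈ S', π v ≤ π v') :
    ∀ (l : List U) (M : Finset V), (∀ v ∈ M, v ∉ S') →
      (∀ p ∈ greedyAux E π l M, p.2 ∉ S') →
      (l.toFinset.filter (fun u => ∃ v ∈ S', E u v = true)).card ≤
        ((Finset.univ.filter (fun v => v ∉ S' ∧ π v < π v')) \ M).card := by
  intro l
  induction l with
  | nil => intro M _ _; simp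
  | cons u us ih =>
    intro M hM hp
    set P := Finset.univ.filter (fun v => v ∉ S' ∧ π v < π v') with hPdef
    by_cases hu : ∃ v ∈ S', E u v = true
    · obtain ⟨v0, hv0S, hv0E⟩ := hu
      set cand := (Finset.univ.filter (fun v => E u v = true ∧ v ∉ M)).image π with hcand
      have hv0M : v0 ∉ M := fun h => hM v0 h hv0S
      have hmem : π v0 ∈ cand := by
        rw [hcand]
        exact Finset.mem_image_of_mem π (by simp [hv0E, hv0M])
      have h : cand.Nonempty := ⟨π v0, hmem⟩
      set w := π.symm (cand.min' h) with hw
      have hwE : E u w = true ∧ w ∉ M := by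
        obtain ⟨v, hv, hveq⟩ := Finset.mem_image.mp (cand.min'_mem h)
        simp only [Finset.mem_filter] at hv
        have : w = v := by rw [hw, ← hveq, Equiv.symm_apply_apply]
        rw [this]; exact hv.2
      have hout : greedyAux E π (u :: us) M =
          (u, w) :: greedyAux E π us (insert w M) := by
        rw [greedyAux]; simp only [← hcand, dif_pos h, ← hw]
      have hpw : w ∉ S' := by
        have := hp (u, w) (by rw [hout]; exact List.mem_cons_self)
        exact this
      have hπw : π w ≤ π v0 := by
        have := cand.min'_le _ hmem
        rw [hw, Equiv.apply_symm_apply]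
        exact this
      have hwlt : π w < π v' := by
        rcases lt_or_eq_of_le (le_trans hπw (hv'max v0 hv0S)) with h1 | h1
        · exact h1
        · exact absurd (π.injective h1 ▸ hv') hpw
      have hwP : w ∈ P \ M := by
        simp [hPdef, hpw, hwlt, hwE.2]
      have hM' : ∀ v ∈ insert w M, v ∉ S' := by
        intro v hv
        rcases Finset.mem_insert.mp hv with h1 | h1
        · rw [h1]; exact hpw
        · exact hM v h1
      have hp' : ∀ p ∈ greedyAux E π us (insert w M), p.2 ∉ S' := by
        intro p hpmem
        exact hp p (by rw [hout]; exact List.mem_cons_of_mem _ hpmem)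
      have key := ih (insert w M) hM' hp'
      have hsd : P \ insert w M = (P \ M).erase w := by
        ext x; simp [Finset.mem_sdiff, Finset.mem_erase, Finset.mem_insert]
        tauto
      rw [hsd, Finset.card_erase_of_mem hwP] at key
      have hcardpos : 1 ≤ (P \ M).card := Finset.card_pos.mpr ⟨w, hwP⟩
      have hstep : ((u :: us).toFinset.filter (fun u => ∃ v ∈ S', E u v = true)).card ≤
          (us.toFinset.filter (fun u => ∃ v ∈ S', E u v = true)).card + 1 := by
        simp only [List.toFinset_cons, Finset.filter_insert]
        split
        · exact Finset.card_insert_le _ _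
        · omega
      omega
    · have hstep : ((u :: us).toFinset.filter (fun u => ∃ v ∈ S', E u v = true)).card =
          (us.toFinset.filter (fun u => ∃ v ∈ S', E u v = true)).card := by
        simp only [List.toFinset_cons, Finset.filter_insert]
        rw [if_neg hu]
      rw [hstep]
      set cand := (Finset.univ.filter (fun v => E u v = true ∧ v ∉ M)).image π with hcand
      by_cases h : cand.Nonempty
      · set w := π.symm (cand.min' h) with hw
        have hout : greedyAux E π (u :: us) M =
            (u, w) :: greedyAux E π us (insert w M) := by
          rw [greedyAux]; simp only [← hcand, dif_pos h, ← hw]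
        have hpw : w ∉ S' := hp (u, w) (by rw [hout]; exact List.mem_cons_self)
        have hM' : ∀ v ∈ insert w M, v ∉ S' := by
          intro v hv
          rcases Finset.mem_insert.mp hv with h1 | h1
          · rw [h1]; exact hpw
          · exact hM v h1
        have hp' : ∀ p ∈ greedyAux E π us (insert w M), p.2 ∉ S' := by
          intro p hpmem
          exact hp p (by rw [hout]; exact List.mem_cons_of_mem _ hpmem)
        refine le_trans (ih (insert w M) hM' hp') (Finset.card_le_card ?_)
        exact Finset.sdiff_subset_sdiff le_rfl (Finset.subset_insert _ _)
      · have hout : greedyAux E π (u :: us) M = greedyAux E π us M := by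
          rw [greedyAux]; simp only [← hcand, dif_neg h]
        exact ih M hM (fun p hpmem => hp p (by rw [hout]; exact hpmem))

/-- Safety lemma: let `S' ⊆ S` be the set of lowest-ranked (under `π`) vertices of
`S`, let `v'` be the highest-ranked vertex of `S'`, and let
`P = {v ∉ S' : π(v) < π(v')}`. If `|P| < |N(S')|`, then for every arrival order `σ`
the greedy matching matches at least one vertex of `S'`. -/
theorem safety_sufficient_condition {U V : Type*}
    [Fintype U] [Fintype V] [DecidableEq U] [DecidableEq V] {m n : ℕ}
    (E : U → V → Bool) (π : V ≃ Fin n)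
    (S S' : Finset V) (hsub : S' ⊆ S) (hne : S'.Nonempty)
    (hlow : ∀ v ∈ S', ∀ w ∈ S, w ∉ S' → π v < π w)
    (v' : V) (hv' : v' ∈ S') (hv'max : ∀ v ∈ S', π v ≤ π v')
    (hP : (Finset.univ.filter (fun v => v ∉ S' ∧ π v < π v')).card <
          (Finset.univ.filter (fun u => ∃ v ∈ S', E u v = true)).card) :
    ∀ σ : U ≃ Fin m, ∃ v ∈ S', v ∈ (greedy E σ π).map Prod.snd := by
  intro σ
  by_contra hcon
  push_neg at hcon
  have hp : ∀ p ∈ greedy E σ π, p.2 ∉ S' := by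
    intro p hpmem hpS
    exact hcon p.2 hpS (List.mem_map.mpr ⟨p, hpmem, rfl⟩)
  have key := greedyAux_count E π S' v' hv' hv'max
    ((List.finRange m).map σ.symm) ∅ (by simp) hp
  have hto : ((List.finRange m).map σ.symm).toFinset = (Finset.univ : Finset U) := by
    ext u
    simp only [List.mem_toFinset, List.mem_map, Finset.mem_univ, iff_true]
    exact ⟨σ u, List.mem_finRange _, σ.symm_apply_apply u⟩
  rw [hto, Finset.sdiff_empty] at key
  omega
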